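/- Carleo–Nomura–Imada identity: for σ₁,…,σ_N ∈ {−1,1} and real V, exp(V σ₁σ₂⋯σ_N) = C cos²(b + (π/4)∑_{i=1}^N σ_i), where b = arctan(e^{−V}) − (π/4)·(N mod 4) and C = 1/(cos(arctan(e^{−V})) sin(arctan(e^{−V}))). -/

import Mathlib

open Real

lemma stmt12_aux (N : ℕ) (σ : Fin N → ℝ) (hσ : ∀ i, σ i ∈ ({-1, 1} : Set ℝ)) :
    ∀ s : Finset (Fin N), ∃ k : ℕ, (∑ i ∈ s, σ i) = (s.card : ℝ) - 2 * k ∧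
      (∏ i ∈ s, σ i) = (-1 : ℝ) ^ k := by
  intro s
  induction s using Finset.induction_on with
  | empty => exact ⟨0, by simp⟩
  | @insert a s' ha ih =>
    obtain ⟨k, hsum, hprod⟩ := ih
    rcases hσ a with h | h
    · refine ⟨k + 1, ?_, ?_⟩
      · rw [Finset.sum_insert ha, hsum, Finset.card_insert_of_notMem ha, h]
        push_cast; ring
      · rw [Finset.prod_insert ha, hprod, h, pow_succ]; ring
    · simp only [Set.mem_singleton_iff] at h
      refine ⟨k, ?_, ?_⟩
      · rw [Finset.sum_insert ha, hsum, Finset.card_insert_of_notMem ha, h]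
        push_cast; ring
      · rw [Finset.prod_insert ha, hprod, h, one_mul]

lemma stmt12_sq1 (m : ℤ) : ((-1 : ℝ) ^ m) ^ 2 = 1 := by
  rcases Int.even_or_odd m with h | h
  · rw [h.neg_one_zpow]; norm_num
  · rw [h.neg_one_zpow]; norm_num

theorem stmt12 (N : ℕ) (σ : Fin N → ℝ) (hσ : ∀ i, σ i ∈ ({-1, 1} : Set ℝ)) (V : ℝ) :
    Real.exp (V * ∏ i, σ i) =
      (1 / (Real.cos (Real.arctan (Real.exp (-V))) *
            Real.sin (Real.arctan (Real.exp (-V))))) *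
        (Real.cos ((Real.arctan (Real.exp (-V)) - Real.pi / 4 * (N % 4 : ℕ)) +
          Real.pi / 4 * ∑ i, σ i)) ^ 2 := by
  obtain ⟨k, hsum, hprod⟩ := stmt12_aux N σ hσ Finset.univ
  rw [Finset.card_univ, Fintype.card_fin] at hsum
  set t := Real.exp (-V) with ht
  have ht0 : 0 < t := Real.exp_pos _
  set a := Real.arctan t with ha
  have hca : Real.cos a = 1 / Real.sqrt (1 + t ^ 2) := Real.cos_arctan t
  have hsa : Real.sin a = t / Real.sqrt (1 + t ^ 2) := Real.sin_arctan t
  have hden : (0:ℝ) < 1 + t ^ 2 := by positivity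
  have hsq : Real.sqrt (1 + t ^ 2) ^ 2 = 1 + t ^ 2 := Real.sq_sqrt hden.le
  have hsqrt0 : (0:ℝ) < Real.sqrt (1 + t ^ 2) := Real.sqrt_pos.mpr hden
  have hN : (N : ℝ) = 4 * (N / 4 : ℕ) + (N % 4 : ℕ) := by
    exact_mod_cast (Nat.div_add_mod N 4).symm
  have hexpV : Real.exp V * t = 1 := by
    rw [ht, ← Real.exp_add]; simp
  rw [hsum, hprod]
  rcases Nat.even_or_odd k with hk | hk
  · obtain ⟨q, hq⟩ := hk
    have hpow : (-1 : ℝ) ^ k = 1 := Even.neg_one_pow ⟨q, hq⟩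
    rw [hpow, mul_one]
    set m : ℤ := (N / 4 : ℕ) - (q : ℤ) with hm
    have hangle : a - Real.pi / 4 * (N % 4 : ℕ) + Real.pi / 4 * ((N : ℝ) - 2 * k) =
        a + (m : ℝ) * Real.pi := by
      rw [hq, hm, Int.cast_sub, Int.cast_natCast, Int.cast_natCast]
      push_cast
      linear_combination (Real.pi / 4) * hN
    rw [hangle, Real.cos_add_int_mul_pi, mul_pow, stmt12_sq1, one_mul, hca, hsa]
    rw [div_mul_div_comm, one_mul, Real.mul_self_sqrt hden.le, div_pow, one_pow, hsq,
      one_div_div]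
    field_simp
    linear_combination hexpV
  · obtain ⟨q, hq⟩ := hk
    have hpow : (-1 : ℝ) ^ k = -1 := Odd.neg_one_pow ⟨q, hq⟩
    rw [hpow, mul_neg_one]
    set m : ℤ := (N / 4 : ℕ) - (q : ℤ) with hm
    have hangle : a - Real.pi / 4 * (N % 4 : ℕ) + Real.pi / 4 * ((N : ℝ) - 2 * k) =
        (a - Real.pi / 2) + (m : ℝ) * Real.pi := by
      rw [hq, hm, Int.cast_sub, Int.cast_natCast, Int.cast_natCast]
      push_cast
      linear_combination (Real.pi / 4) * hN
    have hcs : Real.cos (a - Real.pi / 2) = Real.sin a := by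
      rw [Real.cos_sub, Real.cos_pi_div_two, Real.sin_pi_div_two]; ring
    rw [hangle, Real.cos_add_int_mul_pi, mul_pow, stmt12_sq1, one_mul, hcs,
      hca, hsa]
    rw [div_mul_div_comm, one_mul, Real.mul_self_sqrt hden.le, div_pow, hsq, one_div_div]
    field_simp
    rw [← ht]
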